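/- Let a ∈ (0,1], let ⟨α_n : n < ω⟩ be a strictly increasing sequence of countable ordinals, and let ⟨B_i : i < ω₁⟩ be a sequence with B_i ⊆ i for each i < ω₁. Suppose K ∈ ℕ and for each k < K there is u_k ⊆ ω such that: (i) liminf_n |u_k ∩ n|/n ≥ a; (ii) for all m < n in u_k, B_{α_m} = B_{α_n} ∩ α_m; and the sets A_k = ⋃_{n ∈ u_k} B_{α_n} (k < K) are pairwise distinct. Then K · a ≤ 1. -/

import Mathlib

open Filter Set

noncomputable def omega1 : Ordinal.{0} := (Cardinal.aleph 1).ord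

/-- The set of countable limit ordinals, `Lim(ω₁)`. -/
def limOmega1 : Set Ordinal.{0} := {δ | δ < omega1 ∧ Order.IsSuccLimit δ}

/-- `C` is a closed unbounded subset of `ω₁`. -/
def IsClubIn (C : Set Ordinal.{0}) : Prop :=
  C ⊆ Set.Iio omega1 ∧
  (∀ δ, δ < omega1 → Order.IsSuccLimit δ → (∀ β < δ, ∃ γ ∈ C, β < γ ∧ γ < δ) → δ ∈ C) ∧
  (∀ β, β < omega1 → ∃ γ ∈ C, β < γ)

/-- `S` is a stationary subset of `ω₁`. -/
def IsStatIn (S : Set Ordinal.{0}) : Prop :=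
  S ⊆ Set.Iio omega1 ∧ ∀ C, IsClubIn C → (S ∩ C).Nonempty

open scoped Classical in
/-- `|{k < n : α k ∈ A}| / n` as a real number. -/
noncomputable def hitRatio (α : ℕ → Ordinal.{0}) (A : Set Ordinal.{0}) (n : ℕ) : ℝ :=
  ((Finset.range n).filter (fun k => α k ∈ A)).card / n

/-- `α` assigns to each `δ ∈ S` a strictly increasing sequence cofinal in `δ`. -/
def GoodSeq (S : Set Ordinal.{0}) (α : Ordinal.{0} → ℕ → Ordinal.{0}) : Prop :=
  ∀ δ ∈ S, StrictMono (α δ) ∧ (∀ n, α δ n < δ) ∧ (∀ β < δ, ∃ n, β < α δ n)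

/-- The principle `♣_S^{inf ≥ a}`. -/
def ClubSuitInf (S : Set Ordinal.{0}) (a : ℝ) : Prop :=
  ∃ α : Ordinal.{0} → ℕ → Ordinal.{0}, GoodSeq S α ∧
    ∀ A : Set Ordinal.{0}, A ⊆ Set.Iio omega1 → ¬ A.Countable →
      ∃ δ ∈ S, a ≤ Filter.liminf (hitRatio (α δ) A) Filter.atTop

/-- The principle `♣_S^{sup ≥ a}`. -/
def ClubSuitSup (S : Set Ordinal.{0}) (a : ℝ) : Prop :=
  ∃ α : Ordinal.{0} → ℕ → Ordinal.{0}, GoodSeq S α ∧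
    ∀ A : Set Ordinal.{0}, A ⊆ Set.Iio omega1 → ¬ A.Countable →
      ∃ δ ∈ S, a ≤ Filter.limsup (hitRatio (α δ) A) Filter.atTop

/-- The diamond principle `◊` on `ω₁`. -/
def DiamondOmega1 : Prop :=
  ∃ B : Ordinal.{0} → Set Ordinal.{0}, (∀ δ ∈ limOmega1, B δ ⊆ Set.Iio δ) ∧
    ∀ A : Set Ordinal.{0}, A ⊆ Set.Iio omega1 →
      IsStatIn {δ ∈ limOmega1 | A ∩ Set.Iio δ = B δ}

open scoped Classical in
/-- `|u ∩ n| / n` as a real number, for `u ⊆ ℕ`. -/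
noncomputable def natRatio (u : Set ℕ) (n : ℕ) : ℝ :=
  ((Finset.range n).filter (fun k => k ∈ u)).card / n

/-- The counting argument in the proof of Theorem 1.2: if `⟨α_n : n < ω⟩` is a strictly
increasing sequence of countable ordinals, `B_i ⊆ i` for `i < ω₁`, and for each `k < K`
there is `u_k ⊆ ω` of lower density `≥ a` which is coherent along `B ∘ α`, and the
resulting sets `A_k = ⋃_{n ∈ u_k} B_{α_n}` are pairwise distinct, then `K · a ≤ 1`. -/
theorem card_le_of_density (a : ℝ) (ha0 : 0 < a) (ha1 : a ≤ 1)
    (α : ℕ → Ordinal.{0}) (hmono : StrictMono α) (hlt : ∀ n, α n < omega1)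
    (B : Ordinal.{0} → Set Ordinal.{0}) (hB : ∀ i, i < omega1 → B i ⊆ Set.Iio i)
    (K : ℕ) (u : ℕ → Set ℕ)
    (hdens : ∀ k, k < K → a ≤ Filter.liminf (natRatio (u k)) Filter.atTop)
    (hcoh : ∀ k, k < K → ∀ m ∈ u k, ∀ n ∈ u k, m < n →
      B (α m) = B (α n) ∩ Set.Iio (α m))
    (hdist : ∀ k, k < K → ∀ l, l < K → k ≠ l →
      (⋃ n ∈ u k, B (α n)) ≠ (⋃ n ∈ u l, B (α n))) :
    (K : ℝ) * a ≤ 1 := by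
  classical
  -- Step 1: pairwise intersections are finite
  have key : ∀ k l, k < K → l < K → (u k ∩ u l).Infinite →
      (⋃ n ∈ u k, B (α n)) ⊆ (⋃ n ∈ u l, B (α n)) := by
    intro k l hk hl hinf x hx
    simp only [Set.mem_iUnion] at hx ⊢
    obtain ⟨n, hn, hxn⟩ := hx
    obtain ⟨m, hm, hnm⟩ := hinf.exists_gt n
    refine ⟨m, hm.2, ?_⟩
    have hc := hcoh k hk n hn m hm.1 hnm
    rw [hc] at hxn
    exact hxn.1
  have hfin : ∀ k, k < K → ∀ l, l < K → k ≠ l → (u k ∩ u l).Finite := by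
    intro k hk l hl hkl
    by_contra hinf
    exact hdist k hk l hl hkl (subset_antisymm (key k l hk hl hinf)
      (key l k hl hk (by rwa [Set.inter_comm])))
  -- a uniform bound for intersections
  set c : ℕ × ℕ → ℕ := fun p =>
    if h : p.1 < K ∧ p.2 < K ∧ p.1 ≠ p.2 then
      (hfin p.1 h.1 p.2 h.2.1 h.2.2).toFinset.card else 0 with hc_def
  set C : ℕ := ∑ p ∈ Finset.range K ×ˢ Finset.range K, c p with hC_def
  -- Step 2: the counting bound
  have hcount : ∀ n : ℕ,
      (∑ k ∈ Finset.range K, ((Finset.range n).filter (fun x => x ∈ u k)).card)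
        ≤ n + C := by
    intro n
    have h1 : (∑ k ∈ Finset.range K, ((Finset.range n).filter (fun x => x ∈ u k)).card)
        = ∑ x ∈ Finset.range n, ((Finset.range K).filter (fun k => x ∈ u k)).card := by
      simp only [Finset.card_filter]
      exact Finset.sum_comm
    rw [h1]
    have h2 : ∀ x, ((Finset.range K).filter (fun k => x ∈ u k)).card
        ≤ 1 + ∑ p ∈ Finset.range K ×ˢ Finset.range K,
            (if (x ∈ u p.1 ∧ x ∈ u p.2) ∧ p.1 ≠ p.2 then 1 else 0) := by
      intro x
      set S := (Finset.range K).filter (fun k => x ∈ u k) with hS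
      have hoff : S.offDiag = (Finset.range K ×ˢ Finset.range K).filter
          (fun p => (x ∈ u p.1 ∧ x ∈ u p.2) ∧ p.1 ≠ p.2) := by
        ext p
        simp only [Finset.mem_offDiag, hS, Finset.mem_filter, Finset.mem_product]
        tauto
      have hcard : S.offDiag.card = S.card * S.card - S.card := Finset.offDiag_card S
      have hsum : (∑ p ∈ Finset.range K ×ˢ Finset.range K,
            (if (x ∈ u p.1 ∧ x ∈ u p.2) ∧ p.1 ≠ p.2 then 1 else 0))
          = S.offDiag.card := by
        rw [hoff, Finset.card_filter]
      rw [hsum, hcard]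
      have hq : 2 * S.card ≤ 1 + S.card * S.card := by nlinarith [sq_nonneg (S.card - 1)]
      generalize S.card * S.card = m at hq ⊢
      omega
    calc (∑ x ∈ Finset.range n, ((Finset.range K).filter (fun k => x ∈ u k)).card)
        ≤ ∑ x ∈ Finset.range n, (1 + ∑ p ∈ Finset.range K ×ˢ Finset.range K,
            (if (x ∈ u p.1 ∧ x ∈ u p.2) ∧ p.1 ≠ p.2 then 1 else 0)) :=
          Finset.sum_le_sum fun x _ => h2 x
      _ = n + ∑ x ∈ Finset.range n, ∑ p ∈ Finset.range K ×ˢ Finset.range K,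
            (if (x ∈ u p.1 ∧ x ∈ u p.2) ∧ p.1 ≠ p.2 then 1 else 0) := by
          rw [Finset.sum_add_distrib, Finset.sum_const, Finset.card_range, smul_eq_mul,
            mul_one]
      _ ≤ n + C := by
          gcongr
          rw [Finset.sum_comm, hC_def]
          apply Finset.sum_le_sum
          intro p hp
          simp only [Finset.mem_product, Finset.mem_range] at hp
          rw [← Finset.card_filter]
          by_cases hne : p.1 ≠ p.2
          · have : ((Finset.range n).filter
                (fun x => (x ∈ u p.1 ∧ x ∈ u p.2) ∧ p.1 ≠ p.2)).card
                ≤ (hfin p.1 hp.1 p.2 hp.2 hne).toFinset.card := by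
              apply Finset.card_le_card
              intro x hx
              simp only [Finset.mem_filter, Set.Finite.mem_toFinset] at hx ⊢
              exact ⟨hx.2.1.1, hx.2.1.2⟩
            simp only [hc_def]
            rw [dif_pos ⟨hp.1, hp.2, hne⟩]
            exact this
          · simp [hne]
  -- Step 3: analysis
  have hub : ∀ k, Filter.IsBoundedUnder (· ≤ ·) Filter.atTop (natRatio (u k)) := by
    intro k
    refine Filter.isBoundedUnder_of ⟨1, fun n => ?_⟩
    show natRatio (u k) n ≤ 1
    unfold natRatio
    rcases Nat.eq_zero_or_pos n with h | h
    · simp [h]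
    · rw [div_le_one (by positivity)]
      exact_mod_cast Finset.card_filter_le _ _ |>.trans (le_of_eq (Finset.card_range n))
  refine le_of_forall_pos_le_add fun ε hε => ?_
  set ε' : ℝ := ε / (K + 1) with hε'_def
  have hε' : 0 < ε' := by positivity
  have hev : ∀ᶠ n in Filter.atTop, ∀ k ∈ Finset.range K, a - ε' < natRatio (u k) n := by
    rw [Filter.eventually_all_finset]
    intro k hk
    have hk' : k < K := Finset.mem_range.mp hk
    exact Filter.eventually_lt_of_lt_liminf
      (lt_of_lt_of_le (by linarith) (hdens k hk'))
      (Filter.isBoundedUnder_of ⟨0, fun n => by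
        show (0:ℝ) ≤ natRatio (u k) n
        unfold natRatio
        positivity⟩)
  obtain ⟨N, hN⟩ := Filter.eventually_atTop.mp hev
  set n : ℕ := max (N + 1) (Nat.ceil ((C : ℝ) / ε') + 1) with hn_def
  have hn1 : 1 ≤ n := le_trans (Nat.le_add_left 1 N) (le_max_left _ _)
  have hnpos : (0 : ℝ) < n := by exact_mod_cast hn1
  have hnN : N ≤ n := le_trans (Nat.le_succ N) (le_max_left _ _)
  have hCn : (C : ℝ) ≤ ε' * n := by
    have h1 : ((C : ℝ) / ε') ≤ Nat.ceil ((C : ℝ) / ε') := Nat.le_ceil _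
    have h2 : (Nat.ceil ((C : ℝ) / ε') : ℝ) ≤ n := by
      exact_mod_cast le_trans (Nat.le_succ _) (le_max_right _ _)
    have := le_trans h1 h2
    rw [div_le_iff₀ hε'] at this
    linarith [this]
  -- per k lower bound
  have hper : ∀ k, k < K → (a - ε') * n ≤
      (((Finset.range n).filter (fun x => x ∈ u k)).card : ℝ) := by
    intro k hk
    have := hN n hnN k (Finset.mem_range.mpr hk)
    unfold natRatio at this
    rw [lt_div_iff₀ hnpos] at this
    exact le_of_lt this
  have hsum : (K : ℝ) * ((a - ε') * n) ≤ (n : ℝ) + C := by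
    have h1 : (K : ℝ) * ((a - ε') * n)
        ≤ ∑ k ∈ Finset.range K,
            (((Finset.range n).filter (fun x => x ∈ u k)).card : ℝ) := by
      have h := Finset.sum_le_sum fun k hk => hper k (Finset.mem_range.mp hk)
      simpa [Finset.sum_const, Finset.card_range, nsmul_eq_mul] using h
    have h2 := hcount n
    calc (K : ℝ) * ((a - ε') * n) ≤ _ := h1
      _ = ((∑ k ∈ Finset.range K,
            ((Finset.range n).filter (fun x => x ∈ u k)).card : ℕ) : ℝ) := by push_cast; ring_nf
      _ ≤ (n : ℝ) + C := by exact_mod_cast h2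
  have hfinal : (K : ℝ) * (a - ε') ≤ 1 + ε' := by
    have h3 : (K : ℝ) * ((a - ε') * n) ≤ (1 + ε') * n := by
      calc (K : ℝ) * ((a - ε') * n) ≤ (n : ℝ) + C := hsum
        _ ≤ (n : ℝ) + ε' * n := by linarith
        _ = (1 + ε') * n := by ring
    have := (mul_le_mul_iff_of_pos_right hnpos).mp (by linarith [h3] : (K : ℝ) * (a - ε') * n ≤ (1 + ε') * n)
    exact this
  have hKe : (K : ℝ) * ε' + ε' = ε := by
    rw [hε'_def]; field_simp
  have hexp : (K : ℝ) * (a - ε') = K * a - K * ε' := by ring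
  linarith [hfinal, hKe]
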